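/- Let A_n = C_n(f) be Hermitian positive definite with f a nonnegative trigonometric polynomial not identically zero, so that the main diagonal of A_n is D_n = a₀ I_n with a₀ = (1/2π)∫_0^{2π} f > 0. Let P ∈ ℂ^{n×k} be a full column rank matrix and let W = I_n − P(P^H P)^{-1} P^H. Then for γ > 0 the following are equivalent: (a) min_{y ∈ ℂ^k} ‖x − P y‖²_{D_n} ≤ γ ‖x‖²_{A_n} for all x ∈ ℂ^n; (b) W ≤ (γ/a₀) C_n(f) in the partial ordering of Hermitian matrices. Moreover W is a Hermitian orthogonal projector, i.e., W^H = W and W² = W. -/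

import Mathlib

open Matrix Complex
open scoped Matrix ComplexConjugate ComplexOrder

noncomputable section

/-- The Fourier matrix of size `n`: `F_n = (1/√n)[e^{-2πijk/n}]_{j,k=0}^{n-1}`. -/
def fourierMatrix (n : ℕ) : Matrix (Fin n) (Fin n) ℂ :=
  Matrix.of fun j k : Fin n =>
    (((Real.sqrt n : ℝ) : ℂ))⁻¹ *
      Complex.exp (-(2 * (Real.pi : ℂ) * Complex.I * ((j : ℕ) : ℂ) * ((k : ℕ) : ℂ)) / (n : ℂ))

/-- A real-valued function is a trigonometric polynomial: a finite sum `∑_{|j|≤c} a_j e^{ijx}`. -/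
def IsTrigPolyR (f : ℝ → ℝ) : Prop :=
  ∃ (c : ℕ) (a : ℤ → ℂ), ∀ x : ℝ,
    (f x : ℂ) = ∑ j ∈ Finset.Icc (-(c : ℤ)) (c : ℤ), a j * Complex.exp (Complex.I * (j : ℂ) * (x : ℂ))

/-- The circulant matrix generated by a real-valued `f`:
`C_n(f) = F_n · diag_{j}(f(2πj/n)) · F_nᴴ`. -/
def circulantGenR (n : ℕ) (f : ℝ → ℝ) : Matrix (Fin n) (Fin n) ℂ :=
  fourierMatrix n *
    Matrix.diagonal (fun j : Fin n => ((f (2 * Real.pi * (j : ℕ) / n) : ℝ) : ℂ)) *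
    (fourierMatrix n)ᴴ

/-- The zeroth Fourier coefficient `a₀ = (1/2π)∫_0^{2π} f`. -/
def zerothCoeff (f : ℝ → ℝ) : ℝ := (1 / (2 * Real.pi)) * ∫ x in (0 : ℝ)..(2 * Real.pi), f x

/-- The squared weighted Euclidean (semi-)norm `‖x‖_X² = x^H X x` (its real part). -/
def wnormSq {n : ℕ} (X : Matrix (Fin n) (Fin n) ℂ) (x : Fin n → ℂ) : ℝ :=
  (dotProduct (star x) (X.mulVec x)).re

lemma quad_split {m p : Type*} [Fintype m] [Fintype p] (A B : Matrix m p ℂ) (x : p → ℂ) :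
    star (A *ᵥ x) ⬝ᵥ (B *ᵥ x) = star x ⬝ᵥ (Aᴴ * B) *ᵥ x := by
  rw [star_mulVec, ← dotProduct_mulVec, mulVec_mulVec]

lemma quad_conj {p : Type*} [Fintype p] {M : Matrix p p ℂ} (hM : M.IsHermitian) (x : p → ℂ) :
    (star x ⬝ᵥ M *ᵥ x).im = 0 := by
  have h1 : star x ⬝ᵥ M *ᵥ x = star (star x ⬝ᵥ M *ᵥ x) := by
    conv_rhs => rw [← star_dotProduct (M *ᵥ x) x]
    rw [star_mulVec, ← dotProduct_mulVec, hM.eq]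
  rw [Complex.star_def] at h1
  exact Complex.conj_eq_iff_im.mp h1.symm

lemma zerothCoeff_pos {f : ℝ → ℝ} (hf : IsTrigPolyR f) (hf0 : ∀ x, 0 ≤ f x)
    (hfne : ∃ x, f x ≠ 0) : 0 < zerothCoeff f := by
  obtain ⟨c, a, ha⟩ := hf
  have hcont : Continuous f := by
    have hfe : f = fun x : ℝ => (∑ j ∈ Finset.Icc (-(c:ℤ)) (c:ℤ),
        a j * Complex.exp (Complex.I * (j:ℂ) * (x:ℂ))).re := by
      funext x; rw [← ha x, Complex.ofReal_re]
    rw [hfe]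
    exact Complex.continuous_re.comp (continuous_finset_sum _ fun j _ =>
      continuous_const.mul (Complex.continuous_exp.comp
        (continuous_const.mul Complex.continuous_ofReal)))
  have hper : Function.Periodic f (2 * Real.pi) := by
    intro x
    have h : ((f (x + 2*Real.pi) : ℝ) : ℂ) = ((f x : ℝ) : ℂ) := by
      rw [ha, ha]
      refine Finset.sum_congr rfl fun j _ => ?_
      have harg : Complex.I * (j:ℂ) * ((x + 2*Real.pi : ℝ) : ℂ)
          = Complex.I * (j:ℂ) * (x:ℂ) + (j:ℂ) * (2 * Real.pi * Complex.I) := by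
        push_cast; ring
      rw [harg, Complex.exp_add, Complex.exp_int_mul_two_pi_mul_I, mul_one]
    exact_mod_cast h
  obtain ⟨x₁, hx₁⟩ := hfne
  have hx₁p : 0 < f x₁ := (hf0 x₁).lt_of_ne (Ne.symm hx₁)
  have hπ := Real.pi_pos
  have hint : (0:ℝ) < ∫ x in (0:ℝ)..(2*Real.pi), f x := by
    have he : (∫ x in (0:ℝ)..(2*Real.pi), f x)
        = ∫ x in (x₁ - Real.pi)..(x₁ - Real.pi + 2*Real.pi), f x := by
      have := hper.intervalIntegral_add_eq 0 (x₁ - Real.pi)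
      simpa using this
    rw [he, intervalIntegral.integral_pos_iff_support_of_nonneg_ae
      (Filter.Eventually.of_forall hf0) (hcont.intervalIntegrable _ _)]
    refine ⟨by linarith, ?_⟩
    have hU : IsOpen (Function.support f ∩ Set.Ioo (x₁ - Real.pi) (x₁ - Real.pi + 2*Real.pi)) :=
      (hcont.isOpen_support).inter isOpen_Ioo
    have hne : x₁ ∈ Function.support f ∩ Set.Ioo (x₁ - Real.pi) (x₁ - Real.pi + 2*Real.pi) :=
      ⟨hx₁, by constructor <;> linarith⟩
    calc (0:ENNReal)
        < MeasureTheory.volume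
            (Function.support f ∩ Set.Ioo (x₁ - Real.pi) (x₁ - Real.pi + 2*Real.pi)) :=
          hU.measure_pos MeasureTheory.volume ⟨x₁, hne⟩
      _ ≤ MeasureTheory.volume
            (Function.support f ∩ Set.Ioc (x₁ - Real.pi) (x₁ - Real.pi + 2*Real.pi)) :=
          MeasureTheory.measure_mono (Set.inter_subset_inter_right _ Set.Ioo_subset_Ioc_self)
  exact mul_pos (by positivity) hint

theorem approximation_property_reformulation (n k : ℕ) (hkn : k < n)
    (f : ℝ → ℝ) (hf : IsTrigPolyR f) (hf0 : ∀ x, 0 ≤ f x) (hfne : ∃ x, f x ≠ 0)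
    (hA : (circulantGenR n f).PosDef)
    (P : Matrix (Fin n) (Fin k) ℂ) (hP : Function.Injective P.mulVec)
    (γ : ℝ) (hγ : 0 < γ) :
    ((∀ x : Fin n → ℂ, ∃ y : Fin k → ℂ,
        wnormSq ((zerothCoeff f : ℂ) • (1 : Matrix (Fin n) (Fin n) ℂ)) (x - P.mulVec y) ≤
          γ * wnormSq (circulantGenR n f) x)
      ↔ (((γ / zerothCoeff f : ℝ) : ℂ) • circulantGenR n f -
          ((1 : Matrix (Fin n) (Fin n) ℂ) - P * (Pᴴ * P)⁻¹ * Pᴴ)).PosSemidef)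
    ∧ ((1 : Matrix (Fin n) (Fin n) ℂ) - P * (Pᴴ * P)⁻¹ * Pᴴ)ᴴ =
        (1 : Matrix (Fin n) (Fin n) ℂ) - P * (Pᴴ * P)⁻¹ * Pᴴ
    ∧ ((1 : Matrix (Fin n) (Fin n) ℂ) - P * (Pᴴ * P)⁻¹ * Pᴴ) *
        ((1 : Matrix (Fin n) (Fin n) ℂ) - P * (Pᴴ * P)⁻¹ * Pᴴ) =
        (1 : Matrix (Fin n) (Fin n) ℂ) - P * (Pᴴ * P)⁻¹ * Pᴴ := by
  classical
  have ha0 : 0 < zerothCoeff f := zerothCoeff_pos hf hf0 hfne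
  set a₀ := zerothCoeff f with ha₀def
  set A := circulantGenR n f with hAdef
  set Q : Matrix (Fin n) (Fin n) ℂ := P * (Pᴴ * P)⁻¹ * Pᴴ with hQdef
  set W : Matrix (Fin n) (Fin n) ℂ := 1 - Q with hWdef
  -- invertibility of PᴴP
  have hPP : (Pᴴ * P).PosDef := by
    have hherm : (Pᴴ * P).IsHermitian := by
      simpa using Matrix.isHermitian_mul_conjTranspose_self Pᴴ
    refine Matrix.posDef_iff_dotProduct_mulVec.mpr ⟨hherm, fun x hx => ?_⟩
    rw [← quad_split P P x]
    have hPx : P *ᵥ x ≠ 0 := fun h0 => hx (hP (h0.trans (Matrix.mulVec_zero P).symm))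
    exact (dotProduct_star_self_nonneg _).lt_of_ne
      (fun h => hPx (dotProduct_star_self_eq_zero.mp h.symm))
  have hdet : IsUnit (Pᴴ * P).det := (Matrix.isUnit_iff_isUnit_det _).1 hPP.isUnit
  have hinv1 : (Pᴴ * P)⁻¹ * (Pᴴ * P) = 1 := Matrix.nonsing_inv_mul _ hdet
  have hih : ((Pᴴ * P)⁻¹)ᴴ = (Pᴴ * P)⁻¹ := by
    have hherm : (Pᴴ * P).IsHermitian := by
      simpa using Matrix.isHermitian_mul_conjTranspose_self Pᴴ
    rw [Matrix.conjTranspose_nonsing_inv, hherm.eq]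
  have hQH : Qᴴ = Q := by
    rw [hQdef]
    simp only [conjTranspose_mul, conjTranspose_conjTranspose, hih, Matrix.mul_assoc]
  have hQP : Q * P = P := by
    rw [hQdef]
    simp only [Matrix.mul_assoc]
    rw [hinv1, Matrix.mul_one]
  have hQQ : Q * Q = Q := by
    have h1 : Q * Q = Q * P * ((Pᴴ * P)⁻¹ * Pᴴ) := by
      rw [hQdef]
      simp only [Matrix.mul_assoc]
    rw [h1, hQP, hQdef, Matrix.mul_assoc]
  have hWH : Wᴴ = W := by
    rw [hWdef, Matrix.conjTranspose_sub, Matrix.conjTranspose_one, hQH]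
  have hWW : W * W = W := by
    rw [hWdef]
    simp only [Matrix.sub_mul, Matrix.mul_sub, Matrix.one_mul, Matrix.mul_one, hQQ]
    abel
  have hWP : W * P = 0 := by
    rw [hWdef, Matrix.sub_mul, Matrix.one_mul, hQP, sub_self]
  have hWHW : Wᴴ * W = W := by rw [hWH, hWW]
  have h1W : (1 - W)ᴴ * (1 - W) = 1 - W := by
    rw [Matrix.conjTranspose_sub, Matrix.conjTranspose_one, hWH]
    simp only [Matrix.sub_mul, Matrix.mul_sub, Matrix.one_mul, Matrix.mul_one, hWW]
    abel
  have R1 : ∀ x : Fin n → ℂ, star (W *ᵥ x) ⬝ᵥ (W *ᵥ x) = star x ⬝ᵥ W *ᵥ x := fun x => by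
    rw [quad_split, hWHW]
  have R2 : ∀ (x : Fin n → ℂ) (y : Fin k → ℂ),
      star x ⬝ᵥ W *ᵥ x ≤ star (x - P *ᵥ y) ⬝ᵥ (x - P *ᵥ y) := by
    intro x y
    set z := x - P *ᵥ y with hzdef
    have hz : W *ᵥ z = W *ᵥ x := by
      rw [hzdef, Matrix.mulVec_sub, Matrix.mulVec_mulVec, hWP, Matrix.zero_mulVec, sub_zero]
    have hdecomp : star z ⬝ᵥ z
        = star (W *ᵥ z) ⬝ᵥ (W *ᵥ z) + star ((1 - W) *ᵥ z) ⬝ᵥ ((1 - W) *ᵥ z) := by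
      rw [quad_split W W z, quad_split (1 - W) (1 - W) z, hWHW, h1W,
        ← dotProduct_add, ← Matrix.add_mulVec]
      have : W + (1 - W) = (1 : Matrix (Fin n) (Fin n) ℂ) := by abel
      rw [this, Matrix.one_mulVec]
    calc star x ⬝ᵥ W *ᵥ x = star (W *ᵥ x) ⬝ᵥ (W *ᵥ x) := (R1 x).symm
      _ = star (W *ᵥ z) ⬝ᵥ (W *ᵥ z) := by rw [hz]
      _ ≤ star (W *ᵥ z) ⬝ᵥ (W *ᵥ z) + star ((1 - W) *ᵥ z) ⬝ᵥ ((1 - W) *ᵥ z) :=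
          le_add_of_nonneg_right (dotProduct_star_self_nonneg _)
      _ = star z ⬝ᵥ z := hdecomp.symm
  have hwn1 : ∀ z : Fin n → ℂ,
      wnormSq ((a₀ : ℂ) • (1 : Matrix (Fin n) (Fin n) ℂ)) z = a₀ * (star z ⬝ᵥ z).re := by
    intro z
    unfold wnormSq
    rw [Matrix.smul_mulVec, Matrix.one_mulVec, dotProduct_smul, smul_eq_mul]
    simp [Complex.mul_re]
  have hwnA : ∀ x : Fin n → ℂ, wnormSq A x = (star x ⬝ᵥ A *ᵥ x).re := fun _ => rfl
  have hMH : (((γ / a₀ : ℝ) : ℂ) • A - W).IsHermitian := by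
    have : (((γ / a₀ : ℝ) : ℂ) • A - W)ᴴ = ((γ / a₀ : ℝ) : ℂ) • A - W := by
      rw [Matrix.conjTranspose_sub, Matrix.conjTranspose_smul, hA.1.eq, hWH,
        Complex.star_def, Complex.conj_ofReal]
    exact this
  have hMx : ∀ x : Fin n → ℂ, star x ⬝ᵥ (((γ / a₀ : ℝ) : ℂ) • A - W) *ᵥ x
      = ((γ / a₀ : ℝ) : ℂ) * (star x ⬝ᵥ A *ᵥ x) - star x ⬝ᵥ W *ᵥ x := by
    intro x
    rw [Matrix.sub_mulVec, dotProduct_sub, Matrix.smul_mulVec, dotProduct_smul,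
      smul_eq_mul]
  have hAim : ∀ x : Fin n → ℂ, (star x ⬝ᵥ A *ᵥ x).im = 0 := fun x => quad_conj hA.1 x
  have hWim : ∀ x : Fin n → ℂ, (star x ⬝ᵥ W *ᵥ x).im = 0 := fun x => quad_conj hWH x
  refine ⟨⟨fun h => ?_, fun h x => ?_⟩, hWH, hWW⟩
  · -- forward
    refine Matrix.posSemidef_iff_dotProduct_mulVec.mpr ⟨hMH, fun x => ?_⟩
    obtain ⟨y, hy⟩ := h x
    rw [hwn1, hwnA] at hy
    have h2re : (star x ⬝ᵥ W *ᵥ x).re ≤ (star (x - P *ᵥ y) ⬝ᵥ (x - P *ᵥ y)).re :=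
      (Complex.le_def.mp (R2 x y)).1
    rw [hMx x, Complex.le_def]
    constructor
    · simp only [Complex.zero_re, Complex.sub_re, Complex.mul_re, Complex.ofReal_re,
        Complex.ofReal_im, hAim x, zero_mul, mul_zero, sub_zero]
      have key : a₀ * (star x ⬝ᵥ W *ᵥ x).re ≤ γ * (star x ⬝ᵥ A *ᵥ x).re :=
        (mul_le_mul_of_nonneg_left h2re ha0.le).trans hy
      rw [sub_nonneg, show γ / a₀ * (star x ⬝ᵥ A *ᵥ x).re
        = γ * (star x ⬝ᵥ A *ᵥ x).re / a₀ from by ring, le_div_iff₀ ha0, mul_comm]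
      exact key
    · simp [Complex.sub_im, Complex.mul_im, hAim x, hWim x]
  · -- backward
    refine ⟨((Pᴴ * P)⁻¹ * Pᴴ) *ᵥ x, ?_⟩
    have hz : x - P *ᵥ (((Pᴴ * P)⁻¹ * Pᴴ) *ᵥ x) = W *ᵥ x := by
      rw [Matrix.mulVec_mulVec, ← Matrix.mul_assoc, ← hQdef, hWdef,
        Matrix.sub_mulVec, Matrix.one_mulVec]
    rw [hz, hwn1, hwnA, R1 x]
    have h0 := (Matrix.posSemidef_iff_dotProduct_mulVec.mp h).2 x
    rw [hMx x, Complex.le_def] at h0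
    have h0re := h0.1
    simp only [Complex.zero_re, Complex.sub_re, Complex.mul_re, Complex.ofReal_re,
      Complex.ofReal_im, hAim x, zero_mul, mul_zero, sub_zero] at h0re
    have h1 : a₀ * (star x ⬝ᵥ W *ᵥ x).re ≤ a₀ * (γ / a₀ * (star x ⬝ᵥ A *ᵥ x).re) :=
      mul_le_mul_of_nonneg_left (by linarith) ha0.le
    have h2 : a₀ * (γ / a₀ * (star x ⬝ᵥ A *ᵥ x).re) = γ * (star x ⬝ᵥ A *ᵥ x).re := by
      field_simp
    linarith
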